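/- Let |ψ⟩ = Σ_i t_i |i⟩ be a pure singlet state in (ℂ^d)^{⊗n}. Then there exists K ∈ ℕ such that every multi-index l with t_l ≠ 0 contains each value k ∈ {0,…,d−1} exactly K times. In particular, d divides n, with n = K·d. -/

import Mathlib

open scoped BigOperators

/-- The action of `U^{⊗n}` on the coefficient vector of a state in `(ℂ^d)^{⊗n}`. -/
noncomputable def tensorAction {d n : ℕ} (U : Matrix (Fin d) (Fin d) ℂ)
    (t : (Fin n → Fin d) → ℂ) : (Fin n → Fin d) → ℂ :=
  fun i => ∑ j : Fin n → Fin d, (∏ α : Fin n, U (i α) (j α)) * t j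

lemma tensorAction_diagonal {d n : ℕ} (z : Fin d → ℂ) (t : (Fin n → Fin d) → ℂ)
    (l : Fin n → Fin d) :
    tensorAction (Matrix.diagonal z) t l = (∏ α, z (l α)) * t l := by
  unfold tensorAction
  rw [Finset.sum_eq_single l]
  · congr 1
    exact Finset.prod_congr rfl fun α _ => by rw [Matrix.diagonal_apply_eq]
  · intro j _ hj
    obtain ⟨α, hα⟩ := Function.ne_iff.mp (Ne.symm hj)
    rw [Finset.prod_eq_zero (Finset.mem_univ α) (Matrix.diagonal_apply_ne z hα), zero_mul]
  · intro h; exact absurd (Finset.mem_univ l) h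

lemma diagonal_mem_unitary {d : ℕ} (z : Fin d → ℂ) (hz : ∀ k, z k * star (z k) = 1) :
    Matrix.diagonal z ∈ Matrix.unitaryGroup (Fin d) ℂ := by
  rw [Matrix.mem_unitaryGroup_iff, Matrix.star_eq_conjTranspose,
    Matrix.diagonal_conjTranspose, Matrix.diagonal_mul_diagonal]
  ext i j
  rcases eq_or_ne i j with h | h
  · subst h
    simpa [Matrix.diagonal_apply_eq] using hz i
  · simp [Matrix.diagonal_apply_ne _ h, Matrix.one_apply_ne h]

noncomputable def permMat {d : ℕ} (σ : Equiv.Perm (Fin d)) : Matrix (Fin d) (Fin d) ℂ :=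
  Matrix.of fun i j => if i = σ j then 1 else 0

lemma permMat_mem_unitary {d : ℕ} (σ : Equiv.Perm (Fin d)) :
    permMat σ ∈ Matrix.unitaryGroup (Fin d) ℂ := by
  rw [Matrix.mem_unitaryGroup_iff]
  ext i j
  rw [Matrix.mul_apply, Matrix.one_apply]
  rw [Finset.sum_eq_single (σ.symm i)]
  · simp [permMat, Matrix.star_apply, eq_comm]
  · intro k _ hk
    have h1 : permMat σ i k = 0 := by
      simp only [permMat, Matrix.of_apply, ite_eq_right_iff]
      intro h
      exact absurd (by rw [h, Equiv.symm_apply_apply]) hk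
    rw [h1, zero_mul]
  · intro h; exact absurd (Finset.mem_univ _) h

lemma tensorAction_permMat {d n : ℕ} (σ : Equiv.Perm (Fin d)) (t : (Fin n → Fin d) → ℂ)
    (l : Fin n → Fin d) :
    tensorAction (permMat σ) t l = t (fun α => σ.symm (l α)) := by
  unfold tensorAction
  rw [Finset.sum_eq_single (fun α => σ.symm (l α))]
  · simp [permMat]
  · intro j _ hj
    obtain ⟨α, hα⟩ := Function.ne_iff.mp hj
    have h1 : permMat σ (l α) (j α) = 0 := by
      simp only [permMat, Matrix.of_apply, ite_eq_right_iff]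
      intro h
      exact absurd (by rw [h, Equiv.symm_apply_apply]) hα
    rw [Finset.prod_eq_zero (Finset.mem_univ α) h1, zero_mul]
  · intro h; exact absurd (Finset.mem_univ _) h

/-- For a pure singlet state `|ψ⟩ = ∑ᵢ tᵢ|i⟩ ∈ (ℂ^d)^{⊗n}` there exists `K ∈ ℕ`
such that every multi-index `l` with `t l ≠ 0` contains each value
`k ∈ {0,…,d-1}` exactly `K` times; in particular `n = K · d`. -/
theorem stmt_6 (d n : ℕ) (t : (Fin n → Fin d) → ℂ) (ht : t ≠ 0)
    (hsinglet : ∀ U ∈ Matrix.unitaryGroup (Fin d) ℂ, ∃ c : ℂ, tensorAction U t = c • t) :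
    ∃ K : ℕ,
      (∀ l : Fin n → Fin d, t l ≠ 0 → ∀ k : Fin d,
        (Finset.univ.filter fun α : Fin n => l α = k).card = K) ∧
      n = K * d := by
  obtain ⟨l0, hl0⟩ : ∃ l, t l ≠ 0 := by
    by_contra h
    push_neg at h
    exact ht (funext fun l => h l)
  rcases Nat.eq_zero_or_pos d with hd0 | hd0
  · subst hd0
    have hn : n = 0 := by
      rcases Nat.eq_zero_or_pos n with h | h
      · exact h
      · exact (l0 ⟨0, h⟩).elim0
    exact ⟨0, fun l _ k => k.elim0, by omega⟩
  set N : (Fin n → Fin d) → Fin d → ℕ :=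
    fun l k => (Finset.univ.filter fun α => l α = k).card with hN
  have hNle : ∀ l k, N l k < n + 1 := by
    intro l k
    have := Finset.card_filter_le (Finset.univ : Finset (Fin n)) (fun α => l α = k)
    simpa [Nat.lt_succ_iff] using this
  -- primitive root of unity
  set ζ : ℂ := Complex.exp (2 * Real.pi * Complex.I / (n + 1)) with hζ
  have hprim : IsPrimitiveRoot ζ (n + 1) := by
    have := Complex.isPrimitiveRoot_exp (n + 1) (Nat.succ_ne_zero n)
    simpa using this
  have hζunit : ζ * star ζ = 1 := by
    have habs : ‖ζ‖ = 1 := by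
      have h1 : (2 * Real.pi * Complex.I / (n + 1)) = ((2 * Real.pi / (n + 1) : ℝ) : ℂ) * Complex.I := by
        push_cast
        ring
      rw [hζ, h1, Complex.norm_exp_ofReal_mul_I]
    have := Complex.mul_conj ζ
    rw [Complex.normSq_eq_norm_sq, habs] at this
    simpa [Complex.star_def] using this
  -- claim 1: counts are the same on the support
  have claim1 : ∀ l, t l ≠ 0 → ∀ k, N l k = N l0 k := by
    intro l hl k
    have hU : Matrix.diagonal (fun j : Fin d => if j = k then ζ else 1) ∈
        Matrix.unitaryGroup (Fin d) ℂ := by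
      apply diagonal_mem_unitary
      intro j
      rcases eq_or_ne j k with h | h
      · simpa [h] using hζunit
      · simp [h]
    obtain ⟨c, hc⟩ := hsinglet _ hU
    have key : ∀ m, t m ≠ 0 → ζ ^ N m k = c := by
      intro m hm
      have h1 := congrFun hc m
      rw [tensorAction_diagonal] at h1
      have hprod : (∏ α, (fun j : Fin d => if j = k then ζ else 1) (m α)) = ζ ^ N m k := by
        show (∏ α, if m α = k then ζ else 1) = ζ ^ N m k
        rw [Finset.prod_ite, Finset.prod_const, Finset.prod_const, one_pow, mul_one]
      rw [hprod, Pi.smul_apply, smul_eq_mul] at h1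
      exact mul_right_cancel₀ hm h1
    exact hprim.pow_inj (hNle l k) (hNle l0 k) ((key l hl).trans (key l0 hl0).symm)
  -- claim 2: counts of different values agree at l0
  have claim2 : ∀ k m : Fin d, N l0 k = N l0 m := by
    intro k m
    obtain ⟨c, hc⟩ := hsinglet _ (permMat_mem_unitary (Equiv.swap k m))
    set l1 : Fin n → Fin d := fun α => (Equiv.swap k m).symm (l0 α) with hl1def
    have hcne : c ≠ 0 := by
      intro h
      apply ht
      funext l
      have h1 := congrFun hc (fun α => (Equiv.swap k m) (l α))
      rw [tensorAction_permMat, h, Pi.smul_apply, zero_smul] at h1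
      simpa using h1
    have ht1 : t l1 ≠ 0 := by
      have h1 := congrFun hc l0
      rw [tensorAction_permMat] at h1
      rw [hl1def]
      rw [h1, Pi.smul_apply, smul_eq_mul]
      exact mul_ne_zero hcne hl0
    have h1 : N l1 k = N l0 m := by
      simp only [hN, hl1def]
      congr 1
      apply Finset.filter_congr
      intro α _
      rw [Equiv.symm_apply_eq, Equiv.swap_apply_left]
    rw [← h1, claim1 l1 ht1 k]
  refine ⟨N l0 ⟨0, hd0⟩, ?_, ?_⟩
  · intro l hl k
    rw [show (Finset.univ.filter fun α : Fin n => l α = k).card = N l k from rfl,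
      claim1 l hl k, claim2 k ⟨0, hd0⟩]
  · have hsum : n = ∑ k : Fin d, N l0 k := by
      have := Finset.card_eq_sum_card_fiberwise (s := (Finset.univ : Finset (Fin n)))
        (t := (Finset.univ : Finset (Fin d))) (f := l0) (fun x _ => Finset.mem_univ (l0 x))
      simpa [Finset.card_univ] using this
    calc n = ∑ k : Fin d, N l0 k := hsum
      _ = ∑ _k : Fin d, N l0 ⟨0, hd0⟩ := Finset.sum_congr rfl fun k _ => claim2 k _
      _ = d * N l0 ⟨0, hd0⟩ := by rw [Finset.sum_const, Finset.card_univ, Fintype.card_fin, smul_eq_mul]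
      _ = N l0 ⟨0, hd0⟩ * d := mul_comm _ _
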